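/- (Theorem 7, incomplete use of data.) Let π be a Bayesian model on Θ × Y, let Y' be a measurable space with σ-finite reference measure λ_{Y'}, and let t : Y → Y' be measurable. Let π' be the Bayesian model on Θ × Y' with the same prior π'_prior = π_prior and with observation density π'_obs : Y' × Θ → [0,∞) that is a λ_{Y'}-density of the pushforward under t of the measure π_obs(·|θ)·λ_Y, i.e. ∫_{Y'} h(y') π'_obs(y'|θ) dλ_{Y'}(y') = ∫_Y h(t(y)) π_obs(y|θ) dλ_Y(y) for every bounded measurable h : Y' → ℝ and every θ ∈ Θ. Let f' : Θ × Y' → ℝ be a test quantity and φ' a posterior family on Θ × Y' such that neither π' nor φ' has ties with respect to f', and suppose φ' passes continuous SBC with respect to f' in the model π'. Define f(θ,y) := f'(θ, t(y)) and φ(θ|y) := φ'(θ | t(y)). Then φ passes continuous SBC with respect to f in the model π. -/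
import Mathlib


open MeasureTheory Filter Topology

noncomputable section

namespace SBC

variable {Θ Y : Type*} [MeasurableSpace Θ] [MeasurableSpace Y]

/-- Marginal density of the data: `π_marg(y) = ∫ obs(y|θ) prior(θ) dλΘ(θ)`. -/
def marg (lΘ : Measure Θ) (prior : Θ → ℝ) (obs : Y → Θ → ℝ) (y : Y) : ℝ :=
  ∫ θ, obs y θ * prior θ ∂lΘ

/-- Posterior density: `π_post(θ|y) = obs(y|θ) prior(θ) / π_marg(y)`. -/
def post (lΘ : Measure Θ) (prior : Θ → ℝ) (obs : Y → Θ → ℝ) (θ : Θ) (y : Y) : ℝ :=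
  obs y θ * prior θ / marg lΘ prior obs y

/-- CDF of the test quantity `f` under the density `φ(·|y)`:
`C_{φ,f}(s|y) = ∫ 1[f(θ,y) ≤ s] φ(θ|y) dλΘ(θ)`. -/
def Cdf (lΘ : Measure Θ) (φ f : Θ → Y → ℝ) (s : ℝ) (y : Y) : ℝ :=
  ∫ θ, (if f θ y ≤ s then φ θ y else 0) ∂lΘ

/-- Tie probability of the test quantity `f` under the density `φ(·|y)`:
`D_{φ,f}(s|y) = ∫ 1[f(θ,y) = s] φ(θ|y) dλΘ(θ)`. -/
def Dtie (lΘ : Measure Θ) (φ f : Θ → Y → ℝ) (s : ℝ) (y : Y) : ℝ :=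
  ∫ θ, (if f θ y = s then φ θ y else 0) ∂lΘ

/-- The family of densities `φ` has no ties w.r.t. `f`. -/
def NoTies (lΘ : Measure Θ) (φ f : Θ → Y → ℝ) : Prop :=
  ∀ (θt : Θ) (y : Y), Dtie lΘ φ f (f θt y) y = 0

/-- The continuous rank CDF `r_{φ,f}(x | θ̃, y)`. -/
def contRank (lΘ : Measure Θ) (φ f : Θ → Y → ℝ) (x : ℝ) (θt : Θ) (y : Y) : ℝ :=
  if Dtie lΘ φ f (f θt y) y = 0 then
    (if Cdf lΘ φ f (f θt y) y ≤ x then 1 else 0)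
  else
    min 1 (max 0 ((x - Cdf lΘ φ f (f θt y) y + Dtie lΘ φ f (f θt y) y) /
      Dtie lΘ φ f (f θt y) y))

/-- The continuous `q_{φ,f}(x|y)`: average of the continuous rank CDF over the true posterior. -/
def qfun (lΘ : Measure Θ) (prior : Θ → ℝ) (obs : Y → Θ → ℝ) (φ f : Θ → Y → ℝ)
    (x : ℝ) (y : Y) : ℝ :=
  ∫ θt, contRank lΘ φ f x θt y * post lΘ prior obs θt y ∂lΘ

/-- `φ` passes continuous SBC w.r.t. `f`. -/
def PassesContSBC (lΘ : Measure Θ) (lY : Measure Y) (prior : Θ → ℝ)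
    (obs : Y → Θ → ℝ) (φ f : Θ → Y → ℝ) : Prop :=
  ∀ x ∈ Set.Icc (0 : ℝ) 1,
    ∫ y, qfun lΘ prior obs φ f x y * marg lΘ prior obs y ∂lY = x

/-- Number of posterior draws whose test-quantity value is strictly below that of `θt`. -/
def Nless (f : Θ → Y → ℝ) {M : ℕ} (θs : Fin M → Θ) (θt : Θ) (y : Y) : ℕ :=
  (Finset.univ.filter fun m => f (θs m) y < f θt y).card

/-- Number of posterior draws whose test-quantity value ties with that of `θt`. -/
def Neq (f : Θ → Y → ℝ) {M : ℕ} (θs : Fin M → Θ) (θt : Θ) (y : Y) : ℕ :=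
  (Finset.univ.filter fun m => f (θs m) y = f θt y).card

/-- The measure on `Θ` with density `φ(·|y)` w.r.t. `lΘ`. -/
def postFamMeas (lΘ : Measure Θ) (φ : Θ → Y → ℝ) (y : Y) : Measure Θ :=
  lΘ.withDensity fun θ => ENNReal.ofReal (φ θ y)

/-- The `M`-sample rank CDF `R_{φ,f}(i | θ̃, y) = Pr(N_total ≤ i)` for i.i.d. draws from `φ_y`. -/
def sampleRank (lΘ : Measure Θ) (φ f : Θ → Y → ℝ) (M i : ℕ) (θt : Θ) (y : Y) : ℝ :=
  ∫ θs : Fin M → Θ,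
    min 1 (max 0 (((i : ℝ) + 1 - (Nless f θs θt y : ℝ)) / ((Neq f θs θt y : ℝ) + 1)))
    ∂(Measure.pi fun _ : Fin M => postFamMeas lΘ φ y)

/-- The `M`-sample `Q_{φ,f}(i|y)`: average of the sample rank CDF over the true posterior. -/
def Qfun (lΘ : Measure Θ) (prior : Θ → ℝ) (obs : Y → Θ → ℝ)
    (φ f : Θ → Y → ℝ) (M i : ℕ) (y : Y) : ℝ :=
  ∫ θt, sampleRank lΘ φ f M i θt y * post lΘ prior obs θt y ∂lΘ

/-- `φ` passes `M`-sample SBC w.r.t. `f`. -/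
def PassesSampleSBC (lΘ : Measure Θ) (lY : Measure Y) (prior : Θ → ℝ)
    (obs : Y → Θ → ℝ) (φ f : Θ → Y → ℝ) (M : ℕ) : Prop :=
  ∀ i < M, ∫ y, Qfun lΘ prior obs φ f M i y * marg lΘ prior obs y ∂lY
    = ((i : ℝ) + 1) / ((M : ℝ) + 1)

/-- Helper: a nonnegative measurable real function with Bochner integral 1 has
lower integral 1. -/
lemma lintegral_ofReal_eq_one {α : Type*} [MeasurableSpace α] {μ : Measure α}
    {u : α → ℝ} (hm : Measurable u) (hnn : ∀ a, 0 ≤ u a)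
    (hint : ∫ a, u a ∂μ = 1) :
    ∫⁻ a, ENNReal.ofReal (u a) ∂μ = 1 := by
  have h := integral_eq_lintegral_of_nonneg_ae (μ := μ)
    (Filter.Eventually.of_forall hnn) hm.aestronglyMeasurable
  rw [hint] at h
  rw [← ENNReal.toReal_eq_one_iff]
  exact h.symm

theorem incomplete_use_of_data
    {Y' : Type*} [MeasurableSpace Y']
    (lΘ : Measure Θ) (lY : Measure Y) (lY' : Measure Y')
    [SigmaFinite lΘ] [SigmaFinite lY] [SigmaFinite lY']
    (prior : Θ → ℝ) (obs : Y → Θ → ℝ) (obs' : Y' → Θ → ℝ)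
    (hprior_meas : Measurable prior) (hprior_nonneg : ∀ θ, 0 ≤ prior θ)
    (hprior_int : ∫ θ, prior θ ∂lΘ = 1)
    (hobs_meas : Measurable (Function.uncurry obs))
    (hobs_nonneg : ∀ (y : Y) (θ : Θ), 0 ≤ obs y θ)
    (hobs_int : ∀ θ, ∫ y, obs y θ ∂lY = 1)
    (hmarg_pos : ∀ y, 0 < marg lΘ prior obs y)
    (hobs'_meas : Measurable (Function.uncurry obs'))
    (hobs'_nonneg : ∀ (y' : Y') (θ : Θ), 0 ≤ obs' y' θ)
    (hobs'_int : ∀ θ, ∫ y', obs' y' θ ∂lY' = 1)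
    (hmarg'_pos : ∀ y', 0 < marg lΘ prior obs' y')
    (t : Y → Y') (ht_meas : Measurable t)
    (hpush : ∀ h : Y' → ℝ, Measurable h → (∃ C : ℝ, ∀ y', |h y'| ≤ C) →
      ∀ θ : Θ, ∫ y', h y' * obs' y' θ ∂lY' = ∫ y, h (t y) * obs y θ ∂lY)
    (f' : Θ → Y' → ℝ) (hf'_meas : Measurable (Function.uncurry f'))
    (φ' : Θ → Y' → ℝ) (hφ'_meas : Measurable (Function.uncurry φ'))
    (hφ'_nonneg : ∀ (θ : Θ) (y' : Y'), 0 ≤ φ' θ y')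
    (hφ'_int : ∀ y', ∫ θ, φ' θ y' ∂lΘ = 1)
    (hnoties_model' : NoTies lΘ (post lΘ prior obs') f')
    (hnoties_fit' : NoTies lΘ φ' f')
    (hpass' : PassesContSBC lΘ lY' prior obs' φ' f') :
    PassesContSBC lΘ lY prior obs
      (fun θ y => φ' θ (t y)) (fun θ y => f' θ (t y)) := by
  intro x hx
  set R : Θ × Y' → ℝ := fun p => contRank lΘ φ' f' x p.1 p.2 with hRdef
  -- bounds for the continuous rank CDF
  have hR0 : ∀ p, 0 ≤ R p := by
    intro p
    simp only [hRdef, contRank]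
    split_ifs
    · exact zero_le_one
    · exact le_refl 0
    · exact le_min zero_le_one (le_max_left _ _)
  have hR1 : ∀ p, R p ≤ 1 := by
    intro p
    simp only [hRdef, contRank]
    split_ifs
    · exact le_refl 1
    · exact zero_le_one
    · exact min_le_left _ _
  -- joint measurability of the fitted CDF and tie probability
  have hCmeas : Measurable fun p : Θ × Y' => Cdf lΘ φ' f' (f' p.1 p.2) p.2 := by
    have hm : Measurable fun q : (Θ × Y') × Θ =>
        (if f' q.2 q.1.2 ≤ f' q.1.1 q.1.2 then φ' q.2 q.1.2 else 0) := by
      refine Measurable.ite ?_ ?_ measurable_const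
      · exact measurableSet_le
          (hf'_meas.comp (measurable_snd.prodMk measurable_fst.snd))
          (hf'_meas.comp (measurable_fst.fst.prodMk measurable_fst.snd))
      · exact hφ'_meas.comp (measurable_snd.prodMk measurable_fst.snd)
    exact hm.stronglyMeasurable.integral_prod_right'.measurable
  have hDmeas : Measurable fun p : Θ × Y' => Dtie lΘ φ' f' (f' p.1 p.2) p.2 := by
    have hm : Measurable fun q : (Θ × Y') × Θ =>
        (if f' q.2 q.1.2 = f' q.1.1 q.1.2 then φ' q.2 q.1.2 else 0) := by
      refine Measurable.ite ?_ ?_ measurable_const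
      · exact measurableSet_eq_fun
          (hf'_meas.comp (measurable_snd.prodMk measurable_fst.snd))
          (hf'_meas.comp (measurable_fst.fst.prodMk measurable_fst.snd))
      · exact hφ'_meas.comp (measurable_snd.prodMk measurable_fst.snd)
    exact hm.stronglyMeasurable.integral_prod_right'.measurable
  have hRmeas : Measurable R := by
    have hRe : R = fun p : Θ × Y' =>
        if Dtie lΘ φ' f' (f' p.1 p.2) p.2 = 0 then
          (if Cdf lΘ φ' f' (f' p.1 p.2) p.2 ≤ x then 1 else 0)
        else
          min 1 (max 0 ((x - Cdf lΘ φ' f' (f' p.1 p.2) p.2 +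
            Dtie lΘ φ' f' (f' p.1 p.2) p.2) / Dtie lΘ φ' f' (f' p.1 p.2) p.2)) := rfl
    rw [hRe]
    refine Measurable.ite (hDmeas (measurableSet_singleton 0)) ?_ ?_
    · exact Measurable.ite (measurableSet_le hCmeas measurable_const)
        measurable_const measurable_const
    · exact measurable_const.min (measurable_const.max
        (((measurable_const.sub hCmeas).add hDmeas).div hDmeas))
  -- measurability of slices
  have hobsθ_meas : ∀ θ, Measurable fun y => obs y θ := fun θ =>
    hobs_meas.comp (measurable_id.prodMk measurable_const)
  have hobs'θ_meas : ∀ θ, Measurable fun y' => obs' y' θ := fun θ =>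
    hobs'_meas.comp (measurable_id.prodMk measurable_const)
  -- integrability of the dominating functions on product spaces
  have hdom1meas : Measurable fun p : Y × Θ => obs p.1 p.2 * prior p.2 :=
    hobs_meas.mul (hprior_meas.comp measurable_snd)
  have hdom1 : Integrable (fun p : Y × Θ => obs p.1 p.2 * prior p.2) (lY.prod lΘ) := by
    refine ⟨hdom1meas.aestronglyMeasurable, ?_⟩
    rw [hasFiniteIntegral_iff_ofReal (Filter.Eventually.of_forall fun p =>
      mul_nonneg (hobs_nonneg _ _) (hprior_nonneg _))]
    have key : ∫⁻ p : Y × Θ, ENNReal.ofReal (obs p.1 p.2 * prior p.2) ∂(lY.prod lΘ) = 1 := by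
      rw [lintegral_prod_symm _ hdom1meas.ennreal_ofReal.aemeasurable]
      have inner : ∀ θ, ∫⁻ y, ENNReal.ofReal (obs y θ * prior θ) ∂lY
          = ENNReal.ofReal (prior θ) := by
        intro θ
        have he : ∀ y, ENNReal.ofReal (obs y θ * prior θ)
            = ENNReal.ofReal (obs y θ) * ENNReal.ofReal (prior θ) := fun y =>
          ENNReal.ofReal_mul (hobs_nonneg _ _)
        simp_rw [he]
        rw [lintegral_mul_const _ (hobsθ_meas θ).ennreal_ofReal,
          lintegral_ofReal_eq_one (hobsθ_meas θ) (fun y => hobs_nonneg y θ) (hobs_int θ),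
          one_mul]
      simp_rw [inner]
      exact lintegral_ofReal_eq_one hprior_meas hprior_nonneg hprior_int
    rw [key]
    exact ENNReal.one_lt_top
  have hdom2meas : Measurable fun p : Θ × Y' => obs' p.2 p.1 * prior p.1 :=
    (hobs'_meas.comp (measurable_snd.prodMk measurable_fst)).mul
      (hprior_meas.comp measurable_fst)
  have hdom2 : Integrable (fun p : Θ × Y' => obs' p.2 p.1 * prior p.1) (lΘ.prod lY') := by
    refine ⟨hdom2meas.aestronglyMeasurable, ?_⟩
    rw [hasFiniteIntegral_iff_ofReal (Filter.Eventually.of_forall fun p =>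
      mul_nonneg (hobs'_nonneg _ _) (hprior_nonneg _))]
    have key : ∫⁻ p : Θ × Y', ENNReal.ofReal (obs' p.2 p.1 * prior p.1) ∂(lΘ.prod lY') = 1 := by
      rw [lintegral_prod _ hdom2meas.ennreal_ofReal.aemeasurable]
      have inner : ∀ θ, ∫⁻ y', ENNReal.ofReal (obs' y' θ * prior θ) ∂lY'
          = ENNReal.ofReal (prior θ) := by
        intro θ
        have he : ∀ y', ENNReal.ofReal (obs' y' θ * prior θ)
            = ENNReal.ofReal (obs' y' θ) * ENNReal.ofReal (prior θ) := fun y' =>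
          ENNReal.ofReal_mul (hobs'_nonneg _ _)
        simp_rw [he]
        rw [lintegral_mul_const _ (hobs'θ_meas θ).ennreal_ofReal,
          lintegral_ofReal_eq_one (hobs'θ_meas θ) (fun y' => hobs'_nonneg y' θ) (hobs'_int θ),
          one_mul]
      simp_rw [inner]
      exact lintegral_ofReal_eq_one hprior_meas hprior_nonneg hprior_int
    rw [key]
    exact ENNReal.one_lt_top
  -- integrability of the two main integrands
  have hF1meas : Measurable fun p : Y × Θ => R (p.2, t p.1) * (obs p.1 p.2 * prior p.2) :=
    (hRmeas.comp (measurable_snd.prodMk (ht_meas.comp measurable_fst))).mul hdom1meas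
  have hint1 : Integrable (fun p : Y × Θ => R (p.2, t p.1) * (obs p.1 p.2 * prior p.2))
      (lY.prod lΘ) := by
    refine hdom1.mono hF1meas.aestronglyMeasurable (Filter.Eventually.of_forall fun p => ?_)
    have hd : 0 ≤ obs p.1 p.2 * prior p.2 := mul_nonneg (hobs_nonneg _ _) (hprior_nonneg _)
    rw [norm_mul]
    simp only [Real.norm_eq_abs]
    rw [abs_of_nonneg (hR0 _), abs_of_nonneg hd]
    exact mul_le_of_le_one_left hd (hR1 _)
  have hF2meas : Measurable fun p : Θ × Y' => R p * (obs' p.2 p.1 * prior p.1) :=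
    hRmeas.mul hdom2meas
  have hint2 : Integrable (fun p : Θ × Y' => R p * (obs' p.2 p.1 * prior p.1))
      (lΘ.prod lY') := by
    refine hdom2.mono hF2meas.aestronglyMeasurable (Filter.Eventually.of_forall fun p => ?_)
    have hd : 0 ≤ obs' p.2 p.1 * prior p.1 := mul_nonneg (hobs'_nonneg _ _) (hprior_nonneg _)
    rw [norm_mul]
    simp only [Real.norm_eq_abs]
    rw [abs_of_nonneg (hR0 _), abs_of_nonneg hd]
    exact mul_le_of_le_one_left hd (hR1 _)
  -- main computation
  calc ∫ y, qfun lΘ prior obs (fun θ y => φ' θ (t y)) (fun θ y => f' θ (t y)) x y *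
        marg lΘ prior obs y ∂lY
      = ∫ y, ∫ θt, R (θt, t y) * (obs y θt * prior θt) ∂lΘ ∂lY := by
        refine integral_congr_ae (Filter.Eventually.of_forall fun y => ?_)
        simp only [qfun]
        rw [← integral_mul_const]
        refine integral_congr_ae (Filter.Eventually.of_forall fun θt => ?_)
        have hcr : contRank lΘ (fun θ y => φ' θ (t y)) (fun θ y => f' θ (t y)) x θt y
            = R (θt, t y) := rfl
        beta_reduce
        rw [hcr]
        simp only [post]
        rw [mul_assoc, div_mul_cancel₀ _ (hmarg_pos y).ne']
    _ = ∫ θt, ∫ y, R (θt, t y) * (obs y θt * prior θt) ∂lY ∂lΘ :=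
        integral_integral_swap hint1
    _ = ∫ θt, ∫ y', R (θt, y') * (obs' y' θt * prior θt) ∂lY' ∂lΘ := by
        refine integral_congr_ae (Filter.Eventually.of_forall fun θt => ?_)
        have hb : ∀ y', |R (θt, y')| ≤ 1 := fun y' => by
          rw [abs_of_nonneg (hR0 _)]; exact hR1 _
        have hmθ : Measurable fun y' => R (θt, y') :=
          hRmeas.comp (measurable_const.prodMk measurable_id)
        have hp : ∫ y', R (θt, y') * obs' y' θt ∂lY'
            = ∫ y, R (θt, t y) * obs y θt ∂lY :=
          hpush (fun y' => R (θt, y')) hmθ ⟨1, hb⟩ θt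
        calc ∫ y, R (θt, t y) * (obs y θt * prior θt) ∂lY
            = ∫ y, (R (θt, t y) * obs y θt) * prior θt ∂lY := by
              simp_rw [mul_assoc]
          _ = (∫ y, R (θt, t y) * obs y θt ∂lY) * prior θt := integral_mul_const _ _
          _ = (∫ y', R (θt, y') * obs' y' θt ∂lY') * prior θt := by rw [hp]
          _ = ∫ y', (R (θt, y') * obs' y' θt) * prior θt ∂lY' :=
              (integral_mul_const _ _).symm
          _ = ∫ y', R (θt, y') * (obs' y' θt * prior θt) ∂lY' := by
              simp_rw [mul_assoc]
    _ = ∫ y', ∫ θt, R (θt, y') * (obs' y' θt * prior θt) ∂lΘ ∂lY' :=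
        integral_integral_swap hint2
    _ = ∫ y', qfun lΘ prior obs' φ' f' x y' * marg lΘ prior obs' y' ∂lY' := by
        refine integral_congr_ae (Filter.Eventually.of_forall fun y' => ?_)
        simp only [qfun]
        rw [← integral_mul_const]
        refine integral_congr_ae (Filter.Eventually.of_forall fun θt => ?_)
        have hcr : contRank lΘ φ' f' x θt y' = R (θt, y') := rfl
        beta_reduce
        rw [hcr]
        simp only [post]
        rw [mul_assoc, div_mul_cancel₀ _ (hmarg'_pos y').ne']
    _ = x := hpass' x hx

end SBC
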